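/- Every finite simple graph that is 3-connected contains a subdivision of K₄; that is, there exist four distinct vertices w₁, w₂, w₃, w₄ of G and six paths P_{ij} in G for 1 ≤ i < j ≤ 4, where P_{ij} has endpoints w_i and w_j, any two of the six paths share no vertices other than common endpoints among {w₁, w₂, w₃, w₄}, and no w_k is an internal vertex of any of the paths. -/

import Mathlib

section K4helpers

open SimpleGraph Walk

variable {V : Type*} {G : SimpleGraph V}




/-- In a path formed by appending two walks, a common vertex must be the junction. -/
lemma K4aux_append_inter {s m t : V} {q : G.Walk s m} {r : G.Walk m t}
    (hp : (q.append r).IsPath) : ∀ x, x ∈ q.support → x ∈ r.support → x = m := by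
  intro x hxq hxr
  by_contra hne
  have hnd := hp.support_nodup
  rw [SimpleGraph.Walk.support_append] at hnd
  have hdisj := List.disjoint_of_nodup_append hnd
  have hx' : x ∈ r.support.tail := by
    rw [r.support_eq_cons, List.mem_cons] at hxr
    rcases hxr with h | h
    · exact absurd h hne
    · exact h
  exact hdisj hxq hx'

lemma K4aux_takeUntil_inter [DecidableEq V] {s t : V} {p : G.Walk s t} (hp : p.IsPath)
    {y : V} (hy : y ∈ p.support) :
    ∀ x, x ∈ (p.takeUntil y hy).support → x ∈ (p.dropUntil y hy).support → x = y := by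
  have h := p.take_spec hy
  exact K4aux_append_inter (by rwa [h])

/-- first vertex of a walk satisfying `P`, as a decomposition. -/
lemma K4aux_exists_first {s t : V} (W : G.Walk s t) (P : V → Prop) (ht : P t) :
    ∃ y, P y ∧ ∃ (W1 : G.Walk s y) (W2 : G.Walk y t),
      W = W1.append W2 ∧ ∀ x ∈ W1.support, P x → x = y := by
  classical
  induction W with
  | nil =>
    exact ⟨_, ht, Walk.nil, Walk.nil, rfl, by simp⟩
  | @cons u v t h q ih =>
    by_cases hs : P u
    · refine ⟨u, hs, Walk.nil, Walk.cons h q, by simp, by simp⟩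
    · obtain ⟨y, hy, W1, W2, rfl, hW1⟩ := ih ht
      refine ⟨y, hy, Walk.cons h W1, W2, by simp, ?_⟩
      intro x hx hPx
      rw [Walk.support_cons, List.mem_cons] at hx
      rcases hx with h' | h'
      · exact absurd (h' ▸ hPx) hs
      · exact hW1 x h' hPx

/-- last vertex of a walk satisfying `P`, as a decomposition. -/
lemma K4aux_exists_last {s t : V} (W : G.Walk s t) (P : V → Prop)
    (hex : ∃ x ∈ W.support, P x) :
    ∃ y, P y ∧ ∃ (W1 : G.Walk s y) (W2 : G.Walk y t),
      W = W1.append W2 ∧ ∀ x ∈ W2.support, P x → x = y := by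
  classical
  induction W with
  | @nil u =>
    obtain ⟨x, hx, hPx⟩ := hex
    rw [Walk.support_nil, List.mem_singleton] at hx
    subst hx
    exact ⟨x, hPx, Walk.nil, Walk.nil, rfl, by simp⟩
  | @cons u v t h q ih =>
    by_cases hq : ∃ x ∈ q.support, P x
    · obtain ⟨y, hy, W1, W2, rfl, hW2⟩ := ih hq
      exact ⟨y, hy, Walk.cons h W1, W2, by simp, hW2⟩
    · have hs : P u := by
        obtain ⟨x, hx, hPx⟩ := hex
        rw [Walk.support_cons, List.mem_cons] at hx
        rcases hx with h' | h'
        · exact h' ▸ hPx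
        · exact absurd ⟨x, h', hPx⟩ hq
      refine ⟨u, hs, Walk.nil, Walk.cons h q, by simp, ?_⟩
      intro x hx hPx
      rw [Walk.support_cons, List.mem_cons] at hx
      rcases hx with h' | h'
      · exact h'
      · exact absurd ⟨x, h', hPx⟩ hq



lemma K4aux_three {α : Type*} [DecidableEq α] {s : Finset α} (h : 3 ≤ s.card) :
    ∃ a ∈ s, ∃ b ∈ s, ∃ c ∈ s, a ≠ b ∧ a ≠ c ∧ b ≠ c := by
  have h1 : 0 < s.card := by omega
  obtain ⟨a, ha⟩ := Finset.card_pos.mp h1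
  have h2 : 0 < (s.erase a).card := by rw [Finset.card_erase_of_mem ha]; omega
  obtain ⟨b, hb⟩ := Finset.card_pos.mp h2
  have h3 : 0 < ((s.erase a).erase b).card := by
    rw [Finset.card_erase_of_mem hb, Finset.card_erase_of_mem ha]; omega
  obtain ⟨c, hc⟩ := Finset.card_pos.mp h3
  obtain ⟨hba, hbs⟩ := Finset.mem_erase.mp hb
  obtain ⟨hcb, hc'⟩ := Finset.mem_erase.mp hc
  obtain ⟨hca, hcs⟩ := Finset.mem_erase.mp hc'
  exact ⟨a, ha, b, hbs, c, hcs, Ne.symm hba, Ne.symm hca, Ne.symm hcb⟩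

lemma K4aux_degree [Fintype V] [DecidableEq V] (G : SimpleGraph V) [DecidableRel G.Adj]
    (hcard : 4 ≤ Fintype.card V)
    (h3c : ∀ S : Set V, S.ncard ≤ 2 → (G.induce Sᶜ).Connected) (v : V) :
    3 ≤ G.degree v := by
  by_contra hlt
  push_neg at hlt
  have hS : (↑(G.neighborFinset v) : Set V).ncard ≤ 2 := by
    rw [Set.ncard_coe_finset, G.card_neighborFinset_eq_degree]; omega
  have hconn := h3c _ hS
  have hv : v ∈ (↑(G.neighborFinset v) : Set V)ᶜ := by simp
  have hdeg : (G.neighborFinset v).card ≤ 2 := by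
    rw [G.card_neighborFinset_eq_degree]; omega
  obtain ⟨w, hw, hwv⟩ := Finset.exists_mem_ne
    (s := (G.neighborFinset v)ᶜ) (by rw [Finset.card_compl]; omega) v
  have hw' : w ∈ (↑(G.neighborFinset v) : Set V)ᶜ := by
    simpa using Finset.mem_compl.mp hw
  obtain ⟨W⟩ := hconn.preconnected ⟨v, hv⟩ ⟨w, hw'⟩
  have hnil : ¬ W.Nil := by
    intro hn
    rw [Walk.nil_iff_length_eq] at hn
    have := Walk.eq_of_length_eq_zero hn
    exact hwv (congrArg Subtype.val this).symm
  have hadj := Walk.adj_snd (p := W) hnil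
  have hGadj : G.Adj v ↑(W.getVert 1) := hadj
  have hmem : (↑(W.getVert 1) : V) ∈ (↑(G.neighborFinset v) : Set V) := by
    simpa using hGadj
  exact (W.getVert 1).2 hmem

lemma K4aux_longest [Fintype V] (G : SimpleGraph V) [Nonempty V] :
    ∃ (u z : V) (p : G.Walk u z), p.IsPath ∧
      ∀ (a b : V) (q : G.Walk a b), q.IsPath → q.length ≤ p.length := by
  classical
  set P : ℕ → Prop := fun n => ∃ (a b : V) (q : G.Walk a b), q.IsPath ∧ q.length = n with hP
  have hP0 : P 0 := by
    obtain ⟨v⟩ := ‹Nonempty V›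
    exact ⟨v, v, Walk.nil, Walk.IsPath.nil, rfl⟩
  have hspec : P (Nat.findGreatest P (Fintype.card V)) :=
    Nat.findGreatest_spec (Nat.zero_le _) hP0
  obtain ⟨u, z, p, hp, hlen⟩ := hspec
  refine ⟨u, z, p, hp, fun a b q hq => ?_⟩
  rw [hlen]
  exact Nat.le_findGreatest (le_of_lt hq.length_lt) ⟨a, b, q, hq, rfl⟩


lemma K4aux_pick3 {α : Type*} {a1 a2 a3 x2 x3 : α} (h12 : a1 ≠ a2) (h13 : a1 ≠ a3)
    (h23 : a2 ≠ a3) (h2 : x2 = a1 ∨ x2 = a2 ∨ x2 = a3) (h3 : x3 = a1 ∨ x3 = a2 ∨ x3 = a3) :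
    ∃ y, (y = a1 ∨ y = a2 ∨ y = a3) ∧ y ≠ x2 ∧ y ≠ x3 := by
  rcases h2 with rfl | rfl | rfl <;> rcases h3 with rfl | rfl | rfl <;>
    first
      | exact ⟨a1, Or.inl rfl, by tauto, by tauto⟩
      | exact ⟨a2, Or.inr (Or.inl rfl), by tauto, by tauto⟩
      | exact ⟨a3, Or.inr (Or.inr rfl), by tauto, by tauto⟩

end K4helpers

section K4main

open SimpleGraph Walk

/-- Every 3-connected finite simple graph contains a subdivision of `K₄`:
there are four distinct vertices and six paths joining each pair of them,
such that none of the four vertices lies on a path not having it as an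
endpoint, and any vertex shared by two of the paths is one of the four
branch vertices (hence a common endpoint). -/
theorem three_connected_contains_K4_subdivision
    {V : Type*} [Fintype V] (G : SimpleGraph V)
    (hcard : 4 ≤ Fintype.card V)
    (h3c : ∀ S : Set V, S.ncard ≤ 2 → (G.induce Sᶜ).Connected) :
    ∃ w : Fin 4 → V, Function.Injective w ∧
      ∃ P : ∀ i j : Fin 4, i < j → G.Walk (w i) (w j),
        (∀ i j (h : i < j), (P i j h).IsPath) ∧
        (∀ i j (h : i < j) (k : Fin 4), k ≠ i → k ≠ j →
          w k ∉ (P i j h).support) ∧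
        (∀ i j (h : i < j) i' j' (h' : i' < j'), (i, j) ≠ (i', j') →
          ∀ x : V, x ∈ (P i j h).support → x ∈ (P i' j' h').support →
            x ∈ Set.range w) := by
  classical
  have hne : Nonempty V := Fintype.card_pos_iff.mp (by omega)
  have hdeg : ∀ v, 3 ≤ G.degree v := fun v => K4aux_degree G hcard h3c v
  obtain ⟨u, z, p, hp, hmax⟩ := K4aux_longest G
  have hnbr : ∀ x, G.Adj u x → x ∈ p.support := by
    intro x hx
    by_contra h'
    have hq : (Walk.cons hx.symm p).IsPath := by
      rw [Walk.cons_isPath_iff]; exact ⟨hp, h'⟩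
    have := hmax _ _ _ hq
    simp [Walk.length_cons] at this
  obtain ⟨a1, ha1, a2, ha2, a3, ha3, h12, h13, h23⟩ :=
    K4aux_three (s := G.neighborFinset u) (hdeg u)
  have hAdjP : ∀ y, (y = a1 ∨ y = a2 ∨ y = a3) → G.Adj u y := by
    intro y hy
    rcases hy with h | h | h
    · rw [h]; exact (SimpleGraph.mem_neighborFinset G u a1).mp ha1
    · rw [h]; exact (SimpleGraph.mem_neighborFinset G u a2).mp ha2
    · rw [h]; exact (SimpleGraph.mem_neighborFinset G u a3).mp ha3
  have hPsup : ∀ y, (y = a1 ∨ y = a2 ∨ y = a3) → y ∈ p.support := fun y hy => hnbr y (hAdjP y hy)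
  -- last of the three neighbors
  obtain ⟨x3, hx3P, q3, r3, heq3, hlast3⟩ :=
    K4aux_exists_last p (fun x => x = a1 ∨ x = a2 ∨ x = a3)
      ⟨a1, hPsup a1 (Or.inl rfl), Or.inl rfl⟩
  replace hx3P : x3 = a1 ∨ x3 = a2 ∨ x3 = a3 := hx3P
  replace hlast3 : ∀ x ∈ r3.support, (x = a1 ∨ x = a2 ∨ x = a3) → x = x3 := hlast3
  have hq3path : q3.IsPath := by
    have := hp; rw [heq3] at this; exact this.of_append_left
  have htq3 : ∀ y, (y = a1 ∨ y = a2 ∨ y = a3) → y ∈ q3.support := by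
    intro y hy
    have hyp := hPsup y hy
    rw [heq3, Walk.support_append, List.mem_append] at hyp
    rcases hyp with h | h
    · exact h
    · have := hlast3 y (List.mem_of_mem_tail h) hy
      rw [this]
      exact q3.end_mem_support
  -- middle neighbor
  have hex2 : ∃ x ∈ q3.support, (x = a1 ∨ x = a2 ∨ x = a3) ∧ x ≠ x3 := by
    by_cases h : a1 = x3
    · refine ⟨a2, htq3 a2 (Or.inr (Or.inl rfl)), Or.inr (Or.inl rfl), fun hh => ?_⟩
      exact h12 (hh.trans h.symm).symm
    · exact ⟨a1, htq3 a1 (Or.inl rfl), Or.inl rfl, h⟩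
  obtain ⟨x2, hx2P, q2, s2, heq2, hlast2⟩ :=
    K4aux_exists_last q3 (fun x => (x = a1 ∨ x = a2 ∨ x = a3) ∧ x ≠ x3) hex2
  replace hx2P : (x2 = a1 ∨ x2 = a2 ∨ x2 = a3) ∧ x2 ≠ x3 := hx2P
  replace hlast2 : ∀ x ∈ s2.support, ((x = a1 ∨ x = a2 ∨ x = a3) ∧ x ≠ x3) → x = x2 := hlast2
  have hq3path' : (q2.append s2).IsPath := by rwa [heq2] at hq3path
  have hq2path : q2.IsPath := hq3path'.of_append_left
  have hs2path : s2.IsPath := hq3path'.of_append_right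
  have htq2 : ∀ y, (y = a1 ∨ y = a2 ∨ y = a3) → y ≠ x3 → y ∈ q2.support := by
    intro y hy hy3
    have hyp := htq3 y hy
    rw [heq2, Walk.support_append, List.mem_append] at hyp
    rcases hyp with h | h
    · exact h
    · have := hlast2 y (List.mem_of_mem_tail h) ⟨hy, hy3⟩
      rw [this]
      exact q2.end_mem_support
  -- smallest neighbor
  obtain ⟨x1, hx1P, hx1ne2, hx1ne3⟩ := K4aux_pick3 h12 h13 h23 hx2P.1 hx3P
  have hAdj1 : G.Adj u x1 := hAdjP x1 hx1P
  have hAdj2 : G.Adj u x2 := hAdjP x2 hx2P.1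
  have hAdj3 : G.Adj u x3 := hAdjP x3 hx3P
  have hx1q2 : x1 ∈ q2.support := htq2 x1 hx1P hx1ne3
  -- the two path segments
  set S1 : G.Walk x1 x2 := q2.dropUntil x1 hx1q2 with hS1def
  have hS1path : S1.IsPath := hq2path.dropUntil hx1q2
  have hS1sub : S1.support ⊆ q2.support := q2.support_dropUntil_subset hx1q2
  have hcap : ∀ x, x ∈ S1.support → x ∈ s2.support → x = x2 :=
    fun x hx hx' => K4aux_append_inter hq3path' x (hS1sub hx) hx'
  have huS1 : u ∉ S1.support := by
    intro h
    exact hAdj1.ne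
      (K4aux_takeUntil_inter hq2path hx1q2 u (q2.takeUntil x1 hx1q2).start_mem_support h)
  have huS2 : u ∉ s2.support := by
    intro h
    exact hAdj2.ne (K4aux_append_inter hq3path' u q2.start_mem_support h)
  -- connectivity away from u and x2
  have hScard : ({u, x2} : Set V).ncard ≤ 2 := by
    refine le_trans (Set.ncard_insert_le _ _) ?_
    simp
  have hx1c : x1 ∈ ({u, x2} : Set V)ᶜ := by
    simp only [Set.mem_compl_iff, Set.mem_insert_iff, Set.mem_singleton_iff, not_or]
    exact ⟨hAdj1.ne', hx1ne2⟩
  have hx3c : x3 ∈ ({u, x2} : Set V)ᶜ := by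
    simp only [Set.mem_compl_iff, Set.mem_insert_iff, Set.mem_singleton_iff, not_or]
    exact ⟨hAdj3.ne', fun h => hx2P.2 h.symm⟩
  obtain ⟨W0⟩ := (h3c _ hScard).preconnected ⟨x1, hx1c⟩ ⟨x3, hx3c⟩
  set W : G.Walk x1 x3 := W0.map (SimpleGraph.Embedding.induce _).toHom with hWdef
  have hWavoid : ∀ x ∈ W.support, x ≠ u ∧ x ≠ x2 := by
    intro x hx
    have hx : x ∈ W0.support.map (SimpleGraph.Embedding.induce (G := G) ({u, x2} : Set V)ᶜ).toHom := by
      rw [← Walk.support_map]; exact hx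
    obtain ⟨y, hy, rfl⟩ := List.mem_map.mp hx
    have hy2 := y.2
    simp only [Set.mem_compl_iff, Set.mem_insert_iff, Set.mem_singleton_iff, not_or] at hy2
    exact hy2
  -- truncate the connecting walk
  obtain ⟨b, hbs2, W1, W2, heqW, hfirstW⟩ :=
    K4aux_exists_first W (· ∈ s2.support) s2.end_mem_support
  obtain ⟨a, haS1, W3, W4, heqW1, hlastW⟩ :=
    K4aux_exists_last W1 (· ∈ S1.support) ⟨x1, W1.start_mem_support, S1.start_mem_support⟩
  have hW4W1 : W4.support ⊆ W1.support := by
    intro x hx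
    rw [heqW1, Walk.mem_support_append_iff]
    exact Or.inr hx
  have hW1W : W1.support ⊆ W.support := by
    intro x hx
    rw [heqW, Walk.mem_support_append_iff]
    exact Or.inl hx
  set Q : G.Walk a b := W4.bypass with hQdef
  have hQpath : Q.IsPath := W4.bypass_isPath
  have hQsub : Q.support ⊆ W4.support := W4.support_bypass_subset
  have hQS1 : ∀ x ∈ Q.support, x ∈ S1.support → x = a :=
    fun x hx h => hlastW x (hQsub hx) h
  have hQS2 : ∀ x ∈ Q.support, x ∈ s2.support → x = b :=
    fun x hx h => hfirstW x (hW4W1 (hQsub hx)) h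
  have hQW : Q.support ⊆ W.support := by
    intro x hx
    exact hW1W (hW4W1 (hQsub hx))
  have huQ : u ∉ Q.support := fun h => (hWavoid _ (hQW h)).1 rfl
  have hx2Q : x2 ∉ Q.support := fun h => (hWavoid _ (hQW h)).2 rfl
  have hau : a ≠ u := (hWavoid a (hQW Q.start_mem_support)).1
  have ha2 : a ≠ x2 := (hWavoid a (hQW Q.start_mem_support)).2
  have hbu : b ≠ u := (hWavoid b (hQW Q.end_mem_support)).1
  have hb2 : b ≠ x2 := (hWavoid b (hQW Q.end_mem_support)).2
  have hab : a ≠ b := fun h => ha2 (hcap a haS1 (h ▸ hbs2))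
  -- final pieces
  set T1 : G.Walk x1 a := S1.takeUntil a haS1 with hT1def
  set D1 : G.Walk a x2 := S1.dropUntil a haS1 with hD1def
  set T2 : G.Walk x2 b := s2.takeUntil b hbs2 with hT2def
  set D2 : G.Walk b x3 := s2.dropUntil b hbs2 with hD2def
  have hT1D1 : ∀ x, x ∈ T1.support → x ∈ D1.support → x = a :=
    K4aux_takeUntil_inter hS1path haS1
  have hT2D2 : ∀ x, x ∈ T2.support → x ∈ D2.support → x = b :=
    K4aux_takeUntil_inter hs2path hbs2
  have hT1sub : T1.support ⊆ S1.support := S1.support_takeUntil_subset haS1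
  have hD1sub : D1.support ⊆ S1.support := S1.support_dropUntil_subset haS1
  have hT2sub : T2.support ⊆ s2.support := s2.support_takeUntil_subset hbs2
  have hD2sub : D2.support ⊆ s2.support := s2.support_dropUntil_subset hbs2
  have hx2T1 : x2 ∉ T1.support := fun h => ha2 (hT1D1 x2 h D1.end_mem_support).symm
  have hx2D2 : x2 ∉ D2.support := fun h => hb2 (hT2D2 x2 T2.start_mem_support h).symm
  have hbS1 : b ∉ S1.support := fun h => hb2 (hcap b h hbs2)
  have haS2 : a ∉ s2.support := fun h => ha2 (hcap a haS1 h)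
  -- directed distinctness
  have d1 : u ≠ a := hau.symm
  have d3 : u ≠ x2 := hAdj2.ne
  have d5 : u ≠ b := hbu.symm
  have d7 : a ≠ x2 := ha2
  have d9 : a ≠ b := hab
  have d11 : x2 ≠ b := hb2.symm
  -- path facts
  have p01 : (Walk.cons hAdj1 T1).IsPath := by
    rw [Walk.cons_isPath_iff]
    exact ⟨hS1path.takeUntil haS1, fun h => huS1 (hT1sub h)⟩
  have p02 : (Walk.cons hAdj2 Walk.nil).IsPath := by
    rw [Walk.cons_isPath_iff]
    simpa using d3
  have p03 : (Walk.cons hAdj3 D2.reverse).IsPath := by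
    rw [Walk.cons_isPath_iff]
    refine ⟨(hs2path.dropUntil hbs2).reverse, ?_⟩
    rw [Walk.support_reverse, List.mem_reverse]
    exact fun h => huS2 (hD2sub h)
  have p12 : D1.IsPath := hS1path.dropUntil haS1
  have p13 : Q.IsPath := hQpath
  have p23 : T2.IsPath := hs2path.takeUntil hbs2
  -- non-membership facts
  have n01_2 : x2 ∉ (Walk.cons hAdj1 T1).support := by
    rw [Walk.support_cons, List.mem_cons]
    rintro (h | h)
    · exact d3 h.symm
    · exact hx2T1 h
  have n01_3 : b ∉ (Walk.cons hAdj1 T1).support := by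
    rw [Walk.support_cons, List.mem_cons]
    rintro (h | h)
    · exact d5 h.symm
    · exact hbS1 (hT1sub h)
  have n02_1 : a ∉ (Walk.cons hAdj2 Walk.nil).support := by
    simp only [Walk.support_cons, Walk.support_nil, List.mem_cons, List.mem_singleton]
    rintro (h | h | h)
    · exact d1 h.symm
    · exact d7 h
    · exact List.not_mem_nil h
  have n02_3 : b ∉ (Walk.cons hAdj2 Walk.nil).support := by
    simp only [Walk.support_cons, Walk.support_nil, List.mem_cons, List.mem_singleton]
    rintro (h | h | h)
    · exact d5 h.symm
    · exact d11 h.symm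
    · exact List.not_mem_nil h
  have n03_1 : a ∉ (Walk.cons hAdj3 D2.reverse).support := by
    rw [Walk.support_cons, List.mem_cons, Walk.support_reverse, List.mem_reverse]
    rintro (h | h)
    · exact d1 h.symm
    · exact haS2 (hD2sub h)
  have n03_2 : x2 ∉ (Walk.cons hAdj3 D2.reverse).support := by
    rw [Walk.support_cons, List.mem_cons, Walk.support_reverse, List.mem_reverse]
    rintro (h | h)
    · exact d3 h.symm
    · exact hx2D2 h
  have n12_0 : u ∉ D1.support := fun h => huS1 (hD1sub h)
  have n12_3 : b ∉ D1.support := fun h => hbS1 (hD1sub h)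
  have n13_0 : u ∉ Q.support := huQ
  have n13_2 : x2 ∉ Q.support := hx2Q
  have n23_0 : u ∉ T2.support := fun h => huS2 (hT2sub h)
  have n23_1 : a ∉ T2.support := fun h => haS2 (hT2sub h)
  -- the four branch vertices
  refine ⟨![u, a, x2, b], ?_, ?_⟩
  · intro i j hij
    fin_cases i <;> fin_cases j <;>
      first
        | rfl
        | exact absurd hij d1 | exact absurd hij d1.symm
        | exact absurd hij d3 | exact absurd hij d3.symm
        | exact absurd hij d5 | exact absurd hij d5.symm
        | exact absurd hij d7 | exact absurd hij d7.symm
        | exact absurd hij d9 | exact absurd hij d9.symm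
        | exact absurd hij d11 | exact absurd hij d11.symm
  -- range facts
  have hru : u ∈ Set.range ![u, a, x2, b] := ⟨0, rfl⟩
  have hra : a ∈ Set.range ![u, a, x2, b] := ⟨1, rfl⟩
  have hrx2 : x2 ∈ Set.range ![u, a, x2, b] := ⟨2, rfl⟩
  have hrb : b ∈ Set.range ![u, a, x2, b] := ⟨3, rfl⟩
  have h02R : ∀ x, x ∈ (Walk.cons hAdj2 Walk.nil).support → x ∈ Set.range ![u, a, x2, b] := by
    intro x hx
    simp only [Walk.support_cons, Walk.support_nil, List.mem_cons, List.mem_singleton] at hx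
    rcases hx with rfl | rfl | h
    · exact hru
    · exact hrx2
    · exact absurd h List.not_mem_nil
  have i0103 : ∀ x, x ∈ (Walk.cons hAdj1 T1).support →
      x ∈ (Walk.cons hAdj3 D2.reverse).support → x ∈ Set.range ![u, a, x2, b] := by
    intro x hx hx'
    rw [Walk.support_cons, List.mem_cons] at hx
    rw [Walk.support_cons, List.mem_cons, Walk.support_reverse, List.mem_reverse] at hx'
    rcases hx with rfl | hx
    · exact hru
    rcases hx' with rfl | hx'
    · exact hru
    · exact absurd (hcap x (hT1sub hx) (hD2sub hx') ▸ hx) hx2T1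
  have i0112 : ∀ x, x ∈ (Walk.cons hAdj1 T1).support → x ∈ D1.support →
      x ∈ Set.range ![u, a, x2, b] := by
    intro x hx hx'
    rw [Walk.support_cons, List.mem_cons] at hx
    rcases hx with rfl | hx
    · exact hru
    · exact (hT1D1 x hx hx') ▸ hra
  have i0113 : ∀ x, x ∈ (Walk.cons hAdj1 T1).support → x ∈ Q.support →
      x ∈ Set.range ![u, a, x2, b] := by
    intro x hx hx'
    rw [Walk.support_cons, List.mem_cons] at hx
    rcases hx with rfl | hx
    · exact hru
    · exact (hQS1 x hx' (hT1sub hx)) ▸ hra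
  have i0123 : ∀ x, x ∈ (Walk.cons hAdj1 T1).support → x ∈ T2.support →
      x ∈ Set.range ![u, a, x2, b] := by
    intro x hx hx'
    rw [Walk.support_cons, List.mem_cons] at hx
    rcases hx with rfl | hx
    · exact hru
    · exact absurd (hcap x (hT1sub hx) (hT2sub hx') ▸ hx) hx2T1
  have i0312 : ∀ x, x ∈ (Walk.cons hAdj3 D2.reverse).support → x ∈ D1.support →
      x ∈ Set.range ![u, a, x2, b] := by
    intro x hx hx'
    rw [Walk.support_cons, List.mem_cons, Walk.support_reverse, List.mem_reverse] at hx
    rcases hx with rfl | hx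
    · exact hru
    · exact absurd (hcap x (hD1sub hx') (hD2sub hx) ▸ hx) hx2D2
  have i0313 : ∀ x, x ∈ (Walk.cons hAdj3 D2.reverse).support → x ∈ Q.support →
      x ∈ Set.range ![u, a, x2, b] := by
    intro x hx hx'
    rw [Walk.support_cons, List.mem_cons, Walk.support_reverse, List.mem_reverse] at hx
    rcases hx with rfl | hx
    · exact hru
    · exact (hQS2 x hx' (hD2sub hx)) ▸ hrb
  have i0323 : ∀ x, x ∈ (Walk.cons hAdj3 D2.reverse).support → x ∈ T2.support →
      x ∈ Set.range ![u, a, x2, b] := by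
    intro x hx hx'
    rw [Walk.support_cons, List.mem_cons, Walk.support_reverse, List.mem_reverse] at hx
    rcases hx with rfl | hx
    · exact hru
    · exact (hT2D2 x hx' hx) ▸ hrb
  have i1213 : ∀ x, x ∈ D1.support → x ∈ Q.support → x ∈ Set.range ![u, a, x2, b] := by
    intro x hx hx'
    exact (hQS1 x hx' (hD1sub hx)) ▸ hra
  have i1223 : ∀ x, x ∈ D1.support → x ∈ T2.support → x ∈ Set.range ![u, a, x2, b] := by
    intro x hx hx'
    exact (hcap x (hD1sub hx) (hT2sub hx')) ▸ hrx2
  have i1323 : ∀ x, x ∈ Q.support → x ∈ T2.support → x ∈ Set.range ![u, a, x2, b] := by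
    intro x hx hx'
    exact (hQS2 x hx (hT2sub hx')) ▸ hrb
  refine ⟨fun i j h =>
    match i, j, h with
    | ⟨0, _⟩, ⟨1, _⟩, _ => Walk.cons hAdj1 T1
    | ⟨0, _⟩, ⟨2, _⟩, _ => Walk.cons hAdj2 Walk.nil
    | ⟨0, _⟩, ⟨3, _⟩, _ => Walk.cons hAdj3 D2.reverse
    | ⟨1, _⟩, ⟨2, _⟩, _ => D1
    | ⟨1, _⟩, ⟨3, _⟩, _ => Q
    | ⟨2, _⟩, ⟨3, _⟩, _ => T2
    | ⟨0, _⟩, ⟨0, _⟩, h => absurd h (by simp)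
    | ⟨1, _⟩, ⟨0, _⟩, h => absurd h (by simp [Fin.mk_lt_mk])
    | ⟨1, _⟩, ⟨1, _⟩, h => absurd h (by simp)
    | ⟨2, _⟩, ⟨0, _⟩, h => absurd h (by simp [Fin.mk_lt_mk])
    | ⟨2, _⟩, ⟨1, _⟩, h => absurd h (by simp [Fin.mk_lt_mk])
    | ⟨2, _⟩, ⟨2, _⟩, h => absurd h (by simp)
    | ⟨3, _⟩, ⟨0, _⟩, h => absurd h (by simp [Fin.mk_lt_mk])
    | ⟨3, _⟩, ⟨1, _⟩, h => absurd h (by simp [Fin.mk_lt_mk])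
    | ⟨3, _⟩, ⟨2, _⟩, h => absurd h (by simp [Fin.mk_lt_mk])
    | ⟨3, _⟩, ⟨3, _⟩, h => absurd h (by simp)
    | ⟨n + 4, hn⟩, _, _ => absurd hn (by omega)
    | _, ⟨m + 4, hm⟩, _ => absurd hm (by omega), ?_, ?_, ?_⟩
  · intro i j h
    fin_cases i <;> fin_cases j <;>
      first
        | exact absurd h (by decide)
        | exact p01
        | exact p02
        | exact p03
        | exact p12
        | exact p13
        | exact p23
  · intro i j h k hk1 hk2
    fin_cases i <;> fin_cases j <;>
      first
        | exact absurd h (by decide)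
        | (fin_cases k <;>
            first
              | exact absurd rfl hk1
              | exact absurd rfl hk2
              | exact n01_2
              | exact n01_3
              | exact n02_1
              | exact n02_3
              | exact n03_1
              | exact n03_2
              | exact n12_0
              | exact n12_3
              | exact n13_0
              | exact n13_2
              | exact n23_0
              | exact n23_1)
  · intro i j h i' j' h' hne x hx hx'
    fin_cases i <;> fin_cases j <;>
      first
        | exact absurd h (by decide)
        | (fin_cases i' <;> fin_cases j' <;>
            first
              | exact absurd h' (by decide)
              | exact absurd rfl hne
              | exact h02R x hx
              | exact h02R x hx'
              | exact i0103 x hx hx'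
              | exact i0103 x hx' hx
              | exact i0112 x hx hx'
              | exact i0112 x hx' hx
              | exact i0113 x hx hx'
              | exact i0113 x hx' hx
              | exact i0123 x hx hx'
              | exact i0123 x hx' hx
              | exact i0312 x hx hx'
              | exact i0312 x hx' hx
              | exact i0313 x hx hx'
              | exact i0313 x hx' hx
              | exact i0323 x hx hx'
              | exact i0323 x hx' hx
              | exact i1213 x hx hx'
              | exact i1213 x hx' hx
              | exact i1223 x hx hx'
              | exact i1223 x hx' hx
              | exact i1323 x hx hx'
              | exact i1323 x hx' hx)

end K4main
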